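/- Let f_{n,k} = Σ_{1 ≤ i_1 < ⋯ < i_k ≤ n} ∏_{j=1}^{k}(i_j + j − 1) for 1 ≤ k ≤ n and f_{n,0} = 1. Then f_{n,k} = (n−k+1)(n−k+2)⋯(n+k)/(2^k · k!) = binom(n+k, 2k)·(2k−1)!! for 0 ≤ k ≤ n. -/

import Mathlib

open Nat Finset

/-- sort of inserting a top element -/
lemma sort_insert_top (a : ℕ) (s : Finset ℕ) (h : ∀ b ∈ s, b < a) :
    (insert a s).sort (· ≤ ·) = s.sort (· ≤ ·) ++ [a] := by
  have ha : a ∉ s := fun hx => lt_irrefl a (h a hx)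
  have hperm : List.Perm ((insert a s).sort (· ≤ ·)) (s.sort (· ≤ ·) ++ [a]) := by
    refine ((Finset.sort_perm_toList (insert a s) (· ≤ ·)).trans ?_)
    refine (Finset.toList_insert ha).trans ?_
    refine (List.Perm.cons a (Finset.sort_perm_toList s (· ≤ ·)).symm).trans ?_
    simpa using (List.perm_append_comm (l₁ := [a]) (l₂ := s.sort (· ≤ ·)))
  refine List.Perm.eq_of_pairwise' (Finset.pairwise_sort _ _) ?_ hperm
  rw [List.pairwise_append]
  refine ⟨Finset.pairwise_sort _ _, List.pairwise_singleton _ a, ?_⟩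
  intro x hx y hy
  simp only [List.mem_singleton] at hy
  subst hy
  exact (h x ((Finset.mem_sort _).1 hx)).le

/-- arithmetic identity for the induction step -/
lemma arith_id (n k : ℕ) :
    (n + 1 + (k + 1)).choose (2 * (k + 1)) * (2 * (k + 1) - 1)‼ =
      (n + (k + 1)).choose (2 * (k + 1)) * (2 * (k + 1) - 1)‼ +
        (n + 1 + k) * ((n + k).choose (2 * k) * (2 * k - 1)‼) := by
  have hdf : (2 * (k + 1) - 1)‼ = (2 * k + 1) * (2 * k - 1)‼ := by
    rcases k with _ | k
    · simp
    · have : 2 * (k + 1 + 1) - 1 = (2 * (k + 1) - 1) + 2 := by omega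
      have h4 : 2 * (k + 1) - 1 + 2 = 2 * (k + 1) + 1 := by omega
      rw [this, Nat.doubleFactorial_add_two, h4]
  have h1 : (n + k + 1) * (n + k).choose (2 * k) =
      (n + k + 1).choose (2 * k + 1) * (2 * k + 1) := Nat.add_one_mul_choose_eq (n + k) (2 * k)
  have h2 : (n + 1 + (k + 1)).choose (2 * (k + 1)) =
      (n + (k + 1)).choose (2 * k + 1) + (n + (k + 1)).choose (2 * (k + 1)) := by
    have e1 : n + 1 + (k + 1) = (n + (k + 1)) + 1 := by ring
    have e2 : 2 * (k + 1) = (2 * k + 1) + 1 := by ring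
    rw [e1, e2, Nat.choose_succ_succ']
  rw [hdf, h2]
  have e3 : n + (k + 1) = n + k + 1 := by ring
  have e4 : n + 1 + k = n + k + 1 := by ring
  rw [e3, e4]
  calc ((n + k + 1).choose (2 * k + 1) + (n + k + 1).choose (2 * (k + 1))) *
        ((2 * k + 1) * (2 * k - 1)‼)
      = (n + k + 1).choose (2 * (k + 1)) * ((2 * k + 1) * (2 * k - 1)‼) +
        ((n + k + 1).choose (2 * k + 1) * (2 * k + 1)) * (2 * k - 1)‼ := by ring
    _ = (n + k + 1).choose (2 * (k + 1)) * ((2 * k + 1) * (2 * k - 1)‼) +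
        (n + k + 1) * ((n + k).choose (2 * k) * (2 * k - 1)‼) := by rw [← h1]; ring

/-- the main combinatorial identity, valid for all n k -/
lemma key_id : ∀ n k : ℕ,
    (∑ s ∈ Finset.powersetCard k (Finset.Icc 1 n),
        (((s.sort (· ≤ ·)).mapIdx fun j a => a + j).prod)) =
      (n + k).choose (2 * k) * (2 * k - 1)‼ := by
  intro n
  induction n with
  | zero =>
    intro k
    rcases k with _ | k
    · simp
    · rw [Finset.powersetCard_eq_empty.2 (by simp)]
      rw [Nat.choose_eq_zero_of_lt (by omega)]
      simp
  | succ n ih =>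
    intro k
    rcases k with _ | k
    · simp
    · have hIcc : Finset.Icc 1 (n + 1) = insert (n + 1) (Finset.Icc 1 n) := by
        ext x; simp only [Finset.mem_Icc, Finset.mem_insert]; omega
      have hnot : (n + 1) ∉ Finset.Icc 1 n := by simp
      rw [hIcc, Finset.powersetCard_succ_insert hnot]
      rw [Finset.sum_union]
      · rw [Finset.sum_image]
        · have hterm : ∀ s ∈ Finset.powersetCard k (Finset.Icc 1 n),
              (((insert (n + 1) s).sort (· ≤ ·)).mapIdx fun j a => a + j).prod =
                (n + 1 + k) * ((s.sort (· ≤ ·)).mapIdx fun j a => a + j).prod := by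
            intro s hs
            rw [Finset.mem_powersetCard] at hs
            have hlt : ∀ b ∈ s, b < n + 1 := by
              intro b hb
              have := hs.1 hb
              rw [Finset.mem_Icc] at this
              omega
            rw [sort_insert_top _ _ hlt, List.mapIdx_append_one, List.prod_append,
              Finset.length_sort, hs.2]
            simp [mul_comm]
          rw [Finset.sum_congr rfl hterm, ← Finset.mul_sum, ih k, ih (k + 1)]
          exact (arith_id n k).symm
        · intro s hs t ht hst
          rw [Finset.mem_coe, Finset.mem_powersetCard] at hs ht
          have hns : (n + 1) ∉ s := fun h => by
            have := hs.1 h; rw [Finset.mem_Icc] at this; omega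
          have hnt : (n + 1) ∉ t := fun h => by
            have := ht.1 h; rw [Finset.mem_Icc] at this; omega
          have := congrArg (Finset.erase · (n + 1)) hst
          simpa [Finset.erase_insert hns, Finset.erase_insert hnt] using this
      · rw [Finset.disjoint_left]
        intro s hs hs'
        rw [Finset.mem_powersetCard] at hs
        rw [Finset.mem_image] at hs'
        obtain ⟨t, _, rfl⟩ := hs'
        have : (n + 1) ∈ Finset.Icc 1 n := hs.1 (Finset.mem_insert_self _ _)
        rw [Finset.mem_Icc] at this; omega

lemma fact_prod (m : ℕ) : ∀ r : ℕ, m ! * ∏ j ∈ Finset.range r, (m + 1 + j) = (m + r)! := by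
  intro r
  induction r with
  | zero => simp
  | succ r ih =>
    rw [Finset.prod_range_succ, ← mul_assoc, ih]
    have : m + (r + 1) = (m + r) + 1 := by ring
    rw [this, Nat.factorial_succ]
    ring

lemma fact_df (k : ℕ) : (2 * k)! = 2 ^ k * k ! * (2 * k - 1)‼ := by
  rcases k with _ | k
  · simp
  · have h1 : 2 * (k + 1) = (2 * k + 1) + 1 := by ring
    rw [h1, Nat.factorial_eq_mul_doubleFactorial]
    have h2 : 2 * k + 1 + 1 = 2 * (k + 1) := by ring
    have h3 : 2 * (k + 1) - 1 = 2 * k + 1 := by omega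
    rw [h2, Nat.doubleFactorial_two_mul, h3]

theorem stmt16 (f : ℕ → ℕ → ℕ)
    (hf : ∀ n k, f n k =
      ∑ s ∈ Finset.powersetCard k (Finset.Icc 1 n),
        (((s.sort (· ≤ ·)).mapIdx fun j a => a + j).prod)) :
    ∀ n k, k ≤ n →
      f n k = (n + k).choose (2 * k) * (2 * k - 1)‼ ∧
      (f n k : ℚ) =
        (∏ j ∈ Finset.range (2 * k), ((n : ℚ) - k + 1 + j)) /
          ((2 : ℚ) ^ k * (k ! : ℚ)) := by
  intro n k hk
  have hmain : f n k = (n + k).choose (2 * k) * (2 * k - 1)‼ := by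
    rw [hf]; exact key_id n k
  refine ⟨hmain, ?_⟩
  obtain ⟨m, rfl⟩ : ∃ m, n = m + k := ⟨n - k, by omega⟩
  -- product over ℚ equals cast of nat product
  have hprod : (∏ j ∈ Finset.range (2 * k), ((m + k : ℕ) - (k : ℚ) + 1 + j)) =
      ((∏ j ∈ Finset.range (2 * k), (m + 1 + j) : ℕ) : ℚ) := by
    push_cast
    refine Finset.prod_congr rfl fun j _ => by ring
  -- nat identity: C(m+2k,2k)*(2k-1)!! * (2^k * k!) = ∏
  have hnat : (m + k + k).choose (2 * k) * (2 * k - 1)‼ * (2 ^ k * k !) =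
      ∏ j ∈ Finset.range (2 * k), (m + 1 + j) := by
    have hc : (m + 2 * k).choose (2 * k) * (2 * k)! * m ! = (m + 2 * k)! := by
      have := Nat.choose_mul_factorial_mul_factorial
        (show 2 * k ≤ m + 2 * k by omega)
      simpa using this
    have hp := fact_prod m (2 * k)
    have h2 : m ! * ((m + k + k).choose (2 * k) * (2 * k - 1)‼ * (2 ^ k * k !)) =
        m ! * ∏ j ∈ Finset.range (2 * k), (m + 1 + j) := by
      rw [hp]
      have e : m + k + k = m + 2 * k := by ring
      rw [e, ← hc, fact_df]
      ring
    exact Nat.eq_of_mul_eq_mul_left (Nat.factorial_pos m) h2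
  rw [hmain, hprod, ← hnat]
  have hne : ((2 : ℚ) ^ k * (k ! : ℚ)) ≠ 0 := by positivity
  push_cast
  field_simp
  try ring
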